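/- Under the Kaluza-Klein hypotheses, the base Christoffel symbols of G satisfy Γ^δ_{αβ} = γ^δ_{αβ} − (ε/2) h^{δζ}(φ_β f_{ζα} + φ_α f_{ζβ}), where γ^δ_{αβ} = (1/2) h^{δζ}(∂_β h_{ζα} + ∂_α h_{ζβ} − ∂_ζ h_{αβ}) are the Christoffel symbols of h, and f_{αβ} = ∂_α φ_β − ∂_β φ_α. -/

import Mathlib

open Matrix

/-- Partial derivative in coordinate direction `μ` on ℝ³. -/
noncomputable def pd (μ : Fin 3) (F : (Fin 3 → ℝ) → ℝ) (x : Fin 3 → ℝ) : ℝ :=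
  fderiv ℝ F x (Pi.single μ 1)

/-- The Kaluza-Klein metric `G` with `G_{αβ} = h_{αβ} + ε φ_α φ_β`,
`G_{α2} = G_{2α} = ε φ_α`, `G_{22} = ε`. -/
noncomputable def KK (ε : ℝ) (h : Matrix (Fin 2) (Fin 2) ℝ) (φ : Fin 2 → ℝ) :
    Matrix (Fin 3) (Fin 3) ℝ :=
  Matrix.of fun μ ν =>
    if hμ : (μ : ℕ) < 2 then
      if hν : (ν : ℕ) < 2 then h ⟨(μ : ℕ), hμ⟩ ⟨(ν : ℕ), hν⟩ + ε * φ ⟨(μ : ℕ), hμ⟩ * φ ⟨(ν : ℕ), hν⟩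
      else ε * φ ⟨(μ : ℕ), hμ⟩
    else if hν : (ν : ℕ) < 2 then ε * φ ⟨(ν : ℕ), hν⟩ else ε

/-- Christoffel symbols `Γ^λ_{μν} = (1/2) G^{λρ}(∂_ν G_{ρμ} + ∂_μ G_{ρν} − ∂_ρ G_{μν})`. -/
noncomputable def chris (G : (Fin 3 → ℝ) → Matrix (Fin 3) (Fin 3) ℝ)
    (x : Fin 3 → ℝ) (l μ ν : Fin 3) : ℝ :=
  (1/2) * ∑ ρ, (G x)⁻¹ l ρ *
    (pd ν (fun y => G y ρ μ) x + pd μ (fun y => G y ρ ν) x - pd ρ (fun y => G y μ ν) x)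

/-- Abelian field strength `f_{αβ} = ∂_α φ_β − ∂_β φ_α` (base indices). -/
noncomputable def fs (φf : (Fin 3 → ℝ) → Fin 2 → ℝ) (x : Fin 3 → ℝ) (α β : Fin 2) : ℝ :=
  pd α.castSucc (fun y => φf y β) x - pd β.castSucc (fun y => φf y α) x

/-- Christoffel symbols `γ^δ_{αβ}` of the base metric `h`. -/
noncomputable def gam (hm : (Fin 3 → ℝ) → Matrix (Fin 2) (Fin 2) ℝ)
    (x : Fin 3 → ℝ) (δ α β : Fin 2) : ℝ :=
  (1/2) * ∑ ζ, (hm x)⁻¹ δ ζ *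
    (pd β.castSucc (fun y => hm y ζ α) x + pd α.castSucc (fun y => hm y ζ β) x
      - pd ζ.castSucc (fun y => hm y α β) x)

/- ### Auxiliary lemmas -/

lemma pd_add (μ : Fin 3) {F G : (Fin 3 → ℝ) → ℝ} {x} (hF : DifferentiableAt ℝ F x)
    (hG : DifferentiableAt ℝ G x) :
    pd μ (fun y => F y + G y) x = pd μ F x + pd μ G x := by
  simp [pd, fderiv_fun_add hF hG]

lemma pd_mul (μ : Fin 3) {F G : (Fin 3 → ℝ) → ℝ} {x} (hF : DifferentiableAt ℝ F x)
    (hG : DifferentiableAt ℝ G x) :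
    pd μ (fun y => F y * G y) x = pd μ F x * G x + F x * pd μ G x := by
  simp [pd, fderiv_fun_mul hF hG]; ring

lemma pd_const_mul (μ : Fin 3) (c : ℝ) {F : (Fin 3 → ℝ) → ℝ} {x}
    (hF : DifferentiableAt ℝ F x) :
    pd μ (fun y => c * F y) x = c * pd μ F x := by
  simp [pd, fderiv_const_mul hF c]

lemma pd2_zero {F : (Fin 3 → ℝ) → ℝ} (x : Fin 3 → ℝ) (hF : DifferentiableAt ℝ F x)
    (hi : ∀ y t, F (Function.update y 2 t) = F y) : pd 2 F x = 0 := by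
  have key : ∀ t : ℝ, F (x + t • (Pi.single 2 1 : Fin 3 → ℝ)) = F x := by
    intro t
    have : x + t • (Pi.single 2 1 : Fin 3 → ℝ) = Function.update x 2 (x 2 + t) := by
      funext i
      by_cases h : i = 2 <;> simp [h, Function.update, Pi.single_apply]
    rw [this, hi]
  have hc : HasDerivAt (fun t : ℝ => x + t • (Pi.single 2 1 : Fin 3 → ℝ))
      ((Pi.single 2 1 : Fin 3 → ℝ)) 0 := by
    simpa using ((hasDerivAt_id (0:ℝ)).smul_const ((Pi.single 2 1 : Fin 3 → ℝ))).const_add x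
  have h1 : HasDerivAt (fun t : ℝ => F (x + t • (Pi.single 2 1 : Fin 3 → ℝ)))
      (fderiv ℝ F x (Pi.single 2 1)) 0 := by
    have hx : x + (0:ℝ) • (Pi.single 2 1 : Fin 3 → ℝ) = x := by simp
    have hF' : HasFDerivAt F (fderiv ℝ F x) (x + (0:ℝ) • (Pi.single 2 1 : Fin 3 → ℝ)) := by
      rw [hx]; exact hF.hasFDerivAt
    have := hF'.comp_hasDerivAt 0 hc
    exact this
  have h2 : HasDerivAt (fun t : ℝ => F (x + t • (Pi.single 2 1 : Fin 3 → ℝ))) 0 0 := by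
    have : (fun t : ℝ => F (x + t • (Pi.single 2 1 : Fin 3 → ℝ))) = fun _ => F x := funext key
    rw [this]; exact hasDerivAt_const 0 _
  exact h1.unique h2

/-- The explicit inverse of the Kaluza-Klein metric. -/
noncomputable def Minv (ε : ℝ) (h : Matrix (Fin 2) (Fin 2) ℝ) (φ : Fin 2 → ℝ) :
    Matrix (Fin 3) (Fin 3) ℝ :=
  Matrix.of fun μ ν =>
    if hμ : (μ : ℕ) < 2 then
      if hν : (ν : ℕ) < 2 then h⁻¹ ⟨(μ : ℕ), hμ⟩ ⟨(ν : ℕ), hν⟩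
      else -∑ ζ, h⁻¹ ⟨(μ : ℕ), hμ⟩ ζ * φ ζ
    else if hν : (ν : ℕ) < 2 then -∑ ζ, φ ζ * h⁻¹ ζ ⟨(ν : ℕ), hν⟩
    else 1/ε + ∑ ζ, ∑ η, φ ζ * h⁻¹ ζ η * φ η

variable (ε : ℝ) (h : Matrix (Fin 2) (Fin 2) ℝ) (φ : Fin 2 → ℝ)

lemma KK_bb (α β : Fin 2) : KK ε h φ α.castSucc β.castSucc = h α β + ε * φ α * φ β := by
  simp [KK, Fin.castSucc, α.isLt, β.isLt, (Fin.is_le α : (α:ℕ) ≤ 1), (Fin.is_le β : (β:ℕ) ≤ 1)]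
lemma KK_b2 (α : Fin 2) : KK ε h φ α.castSucc 2 = ε * φ α := by
  simp [KK, α.isLt, (Fin.is_le α : (α:ℕ) ≤ 1), (not_lt.mpr (Fin.is_le α) : ¬ 1 < (α:ℕ))]
lemma KK_2b (β : Fin 2) : KK ε h φ 2 β.castSucc = ε * φ β := by
  simp [KK, β.isLt, (Fin.is_le β : (β:ℕ) ≤ 1), (not_lt.mpr (Fin.is_le β) : ¬ 1 < (β:ℕ))]
lemma KK_22 : KK ε h φ 2 2 = ε := by simp [KK]

lemma Minv_bb (α β : Fin 2) : Minv ε h φ α.castSucc β.castSucc = h⁻¹ α β := by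
  simp [Minv, α.isLt, β.isLt, (Fin.is_le α : (α:ℕ) ≤ 1), (Fin.is_le β : (β:ℕ) ≤ 1)]
lemma Minv_b2 (α : Fin 2) : Minv ε h φ α.castSucc 2 = -∑ ζ, h⁻¹ α ζ * φ ζ := by
  simp [Minv, α.isLt, (Fin.is_le α : (α:ℕ) ≤ 1), (not_lt.mpr (Fin.is_le α) : ¬ 1 < (α:ℕ))]
lemma Minv_2b (β : Fin 2) : Minv ε h φ 2 β.castSucc = -∑ ζ, φ ζ * h⁻¹ ζ β := by
  simp [Minv, β.isLt, (Fin.is_le β : (β:ℕ) ≤ 1), (not_lt.mpr (Fin.is_le β) : ¬ 1 < (β:ℕ))]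
lemma Minv_22 : Minv ε h φ 2 2 = 1/ε + ∑ ζ, ∑ η, φ ζ * h⁻¹ ζ η * φ η := by simp [Minv]

lemma one3_bb (a b : Fin 2) :
    (1 : Matrix (Fin 3) (Fin 3) ℝ) a.castSucc b.castSucc
      = (1 : Matrix (Fin 2) (Fin 2) ℝ) a b := by
  simp [Matrix.one_apply, Fin.castSucc_inj]

lemma KK_mul_Minv (hε : ε ≠ 0) (hinv : IsUnit h.det) : KK ε h φ * Minv ε h φ = 1 := by
  have hH : h * h⁻¹ = 1 := Matrix.mul_nonsing_inv h hinv
  have e : ∀ a b : Fin 2,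
      h a 0 * h⁻¹ 0 b + h a 1 * h⁻¹ 1 b = (1 : Matrix (Fin 2) (Fin 2) ℝ) a b := by
    intro a b
    have := congrFun (congrFun hH a) b
    simpa [Matrix.mul_apply, Fin.sum_univ_two] using this
  have od : ∀ a : Fin 2, (1 : Matrix (Fin 2) (Fin 2) ℝ) a 0 * φ 0 +
      (1 : Matrix (Fin 2) (Fin 2) ℝ) a 1 * φ 1 = φ a := by
    intro a; fin_cases a <;> simp [Matrix.one_apply]
  have hεe : ε * (1/ε) = 1 := by field_simp
  have ln : (Fin.last 2) = (2 : Fin 3) := rfl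
  ext i j
  rw [Matrix.mul_apply, Fin.sum_univ_castSucc, Fin.sum_univ_two, ln]
  induction i using Fin.lastCases with
  | last =>
    rw [ln]
    induction j using Fin.lastCases with
    | last =>
      rw [ln, KK_2b, KK_2b, KK_22, Minv_b2, Minv_b2, Minv_22, Fin.sum_univ_two,
        Fin.sum_univ_two, Fin.sum_univ_two, Fin.sum_univ_two, Fin.sum_univ_two]
      simp only [Matrix.one_apply_eq]
      linear_combination hεe
    | cast b =>
      rw [KK_2b, KK_2b, KK_22, Minv_bb, Minv_bb, Minv_2b, Fin.sum_univ_two]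
      have : (1 : Matrix (Fin 3) (Fin 3) ℝ) 2 b.castSucc = 0 := by
        rw [Matrix.one_apply_ne]
        exact (Fin.castSucc_lt_last b).ne'
      rw [this]; ring
  | cast a =>
    induction j using Fin.lastCases with
    | last =>
      rw [ln, KK_bb, KK_bb, KK_b2, Minv_b2, Minv_b2, Minv_22, Fin.sum_univ_two,
        Fin.sum_univ_two, Fin.sum_univ_two, Fin.sum_univ_two, Fin.sum_univ_two]
      have : (1 : Matrix (Fin 3) (Fin 3) ℝ) a.castSucc 2 = 0 := by
        rw [Matrix.one_apply_ne]
        exact (Fin.castSucc_lt_last a).ne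
      rw [this]
      linear_combination (-(φ 0)) * e a 0 + (-(φ 1)) * e a 1 - od a + φ a * hεe
    | cast b =>
      rw [KK_bb, KK_bb, KK_b2, Minv_bb, Minv_bb, Minv_2b, Fin.sum_univ_two, one3_bb]
      linear_combination e a b

/-- For the Kaluza-Klein metric, the base Christoffel symbols are
Γ^δ_{αβ} = γ^δ_{αβ} − (ε/2) h^{δζ}(φ_β f_{ζα} + φ_α f_{ζβ}). -/
theorem stmt_5
    (ε : ℝ) (hε : 0 < ε)
    (hm : (Fin 3 → ℝ) → Matrix (Fin 2) (Fin 2) ℝ) (φf : (Fin 3 → ℝ) → Fin 2 → ℝ)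
    (hsm : ∀ α β, ContDiff ℝ (⊤ : ℕ∞) fun x => hm x α β)
    (φsm : ∀ α, ContDiff ℝ (⊤ : ℕ∞) fun x => φf x α)
    (hinv : ∀ x, IsUnit (hm x).det)
    (hind : ∀ x t, hm (Function.update x 2 t) = hm x)
    (φind : ∀ x t, φf (Function.update x 2 t) = φf x) :
    ∀ (x : Fin 3 → ℝ) (δ α β : Fin 2),
      chris (fun y => KK ε (hm y) (φf y)) x δ.castSucc α.castSucc β.castSucc =
        gam hm x δ α β -
          (ε / 2) * ∑ ζ, (hm x)⁻¹ δ ζ * (φf x β * fs φf x ζ α + φf x α * fs φf x ζ β) := by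
  intro x δ α β
  have dh : ∀ a b : Fin 2, DifferentiableAt ℝ (fun y => hm y a b) x := fun a b =>
    ((hsm a b).differentiable (by simp)).differentiableAt
  have dφ : ∀ a : Fin 2, DifferentiableAt ℝ (fun y => φf y a) x := fun a =>
    ((φsm a).differentiable (by simp)).differentiableAt
  have hGinv : (KK ε (hm x) (φf x))⁻¹ = Minv ε (hm x) (φf x) :=
    Matrix.inv_eq_right_inv (KK_mul_Minv ε (hm x) (φf x) hε.ne' (hinv x))
  have pdbb : ∀ (ν : Fin 3) (ρ μ' : Fin 2),
      pd ν (fun y => KK ε (hm y) (φf y) ρ.castSucc μ'.castSucc) x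
        = pd ν (fun y => hm y ρ μ') x
          + (ε * pd ν (fun y => φf y ρ) x * φf x μ'
            + ε * φf x ρ * pd ν (fun y => φf y μ') x) := by
    intro ν ρ μ'
    have hfun : (fun y => KK ε (hm y) (φf y) ρ.castSucc μ'.castSucc)
        = fun y => hm y ρ μ' + ε * φf y ρ * φf y μ' :=
      funext fun y => KK_bb ε (hm y) (φf y) ρ μ'
    rw [hfun, pd_add ν (G := fun y => ε * φf y ρ * φf y μ') (dh ρ μ') (((dφ ρ).const_mul ε).mul (dφ μ')),
      pd_mul ν (F := fun y => ε * φf y ρ) (G := fun y => φf y μ') ((dφ ρ).const_mul ε) (dφ μ'), pd_const_mul ν ε (dφ ρ)]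
  have pd2b : ∀ (ν : Fin 3) (μ' : Fin 2),
      pd ν (fun y => KK ε (hm y) (φf y) 2 μ'.castSucc) x
        = ε * pd ν (fun y => φf y μ') x := by
    intro ν μ'
    have hfun : (fun y => KK ε (hm y) (φf y) 2 μ'.castSucc) = fun y => ε * φf y μ' :=
      funext fun y => KK_2b ε (hm y) (φf y) μ'
    rw [hfun, pd_const_mul ν ε (dφ μ')]
  have pdz_h : ∀ a b : Fin 2, pd 2 (fun y => hm y a b) x = 0 := fun a b =>
    pd2_zero x (dh a b) (fun y t => by rw [hind y t])
  have pdz_φ : ∀ a : Fin 2, pd 2 (fun y => φf y a) x = 0 := fun a =>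
    pd2_zero x (dφ a) (fun y t => by rw [φind y t])
  have ln : (Fin.last 2) = (2 : Fin 3) := rfl
  simp only [chris, gam, fs]
  rw [hGinv, Fin.sum_univ_castSucc]
  simp only [ln, Minv_bb, Minv_b2, pdbb, pd2b, pdz_h, pdz_φ]
  simp only [Fin.sum_univ_two]
  ring
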